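/- Let A be a countable index set, and for each α ∈ A let G_α be a second-countable profinite group with normalized Haar probability measure μ_α, and let T_α : G_α → G_α be a quotient-preserving map. Let G = ∏_{α ∈ A} G_α with product topology and product measure μ = ∏_{α ∈ A} μ_α (which is the normalized Haar measure on G), and let T = ∏_{α ∈ A} T_α act coordinatewise. For each α set D_α = { [G_α : N] : N ∈ F(T_α) }, the set of indices of the open normal subgroups in the finite factor set of T_α. Then T is measure-preserving and ergodic with respect to μ if and only if each T_α is measure-preserving and ergodic with respect to μ_α and for all distinct α, β ∈ A, every n ∈ D_α and m ∈ D_β satisfy gcd(n, m) = 1. -/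

import Mathlib

open MeasureTheory

/-- `T` factors through the quotient map `G → G/N`. -/
def MapFactorsThrough {G : Type*} [Group G] (T : G → G) (N : Subgroup G) : Prop :=
  ∀ x y : G, x⁻¹ * y ∈ N → (T x)⁻¹ * T y ∈ N

/-- `T` is a quotient-preserving map: the open normal subgroups through whose quotient
maps `T` factors contain a base of neighborhoods of the identity. -/
def QuotientPreserving {G : Type*} [Group G] [TopologicalSpace G] (T : G → G) : Prop :=
  ∀ U ∈ nhds (1 : G), ∃ N : Subgroup G,
    N.Normal ∧ IsOpen (N : Set G) ∧ (N : Set G) ⊆ U ∧ MapFactorsThrough T N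

open scoped ENNReal

namespace S17
open Function Set


section Perm
variable {Q : Type*} [Finite Q]

lemma exists_iterate_id (f : Q → Q) (hf : Function.Bijective f) :
    ∃ n, 0 < n ∧ f^[n] = id := by
  classical
  let e : Equiv.Perm Q := Equiv.ofBijective f hf
  have hcoe : ∀ n : ℕ, f^[n] = ⇑(e ^ n) := by
    intro n
    induction n with
    | zero => simp
    | succ n ih => funext x; rw [Function.iterate_succ_apply', ih, pow_succ']; rfl
  haveI : Fintype Q := Fintype.ofFinite Q
  refine ⟨orderOf e, orderOf_pos e, ?_⟩
  rw [hcoe, pow_orderOf_eq_one]; rfl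

/-- transitivity of a self-map -/
def Trans' (f : Q → Q) : Prop := ∀ a b : Q, ∃ n : ℕ, f^[n] a = b

lemma minimalPeriod_eq_card (f : Q → Q) (hf : Function.Bijective f) (ht : Trans' f) (x : Q) :
    Function.minimalPeriod f x = Nat.card Q := by
  classical
  haveI : Fintype Q := Fintype.ofFinite Q
  obtain ⟨n, hn, hid⟩ := exists_iterate_id f hf
  have hper : Function.IsPeriodicPt f n x := by
    unfold Function.IsPeriodicPt Function.IsFixedPt; rw [hid]; rfl
  have hpos : 0 < Function.minimalPeriod f x := hper.minimalPeriod_pos hn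
  set p := Function.minimalPeriod f x with hp
  rw [Nat.card_eq_fintype_card]
  apply le_antisymm
  · -- p ≤ card : injectivity on Iio p
    have hinj : Set.InjOn (fun i => f^[i] x) (Set.Iio p) :=
      Function.iterate_injOn_Iio_minimalPeriod
    have := Finset.card_le_card_of_injOn (f := fun i => f^[i] x) (s := Finset.range p)
      (fun a _ => Finset.mem_univ _) (by rw [Finset.coe_range]; exact hinj)
    simpa using this
  · -- card ≤ p : surjectivity
    have hsurj : Set.SurjOn (fun i => f^[i] x) ↑(Finset.range p) ↑(Finset.univ : Finset Q) := by
      intro b _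
      obtain ⟨m, hm⟩ := ht x b
      refine ⟨m % p, by simp [Finset.mem_range, Nat.mod_lt _ hpos], ?_⟩
      simp only
      rw [hp, Function.iterate_mod_minimalPeriod_eq, hm]
    have := Finset.card_le_card_of_surjOn _ hsurj
    simpa using this

lemma card_dvd_of_fixed (f : Q → Q) (hf : Function.Bijective f) (ht : Trans' f) {x : Q} {t : ℕ}
    (h : f^[t] x = x) : Nat.card Q ∣ t :=
  minimalPeriod_eq_card f hf ht x ▸ Function.IsPeriodicPt.minimalPeriod_dvd h

lemma iterate_eq_iterate_iff (f : Q → Q) (hf : Function.Bijective f) (ht : Trans' f) (x : Q)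
    {s t : ℕ} : f^[s] x = f^[t] x ↔ s ≡ t [MOD Nat.card Q] := by
  have hp := minimalPeriod_eq_card f hf ht x
  have hpos : 0 < Function.minimalPeriod f x := by
    rw [hp]; have : Nonempty Q := ⟨x⟩; exact Nat.card_pos
  constructor
  · intro h
    have h1 : f^[s % Function.minimalPeriod f x] x = f^[t % Function.minimalPeriod f x] x := by
      rw [Function.iterate_mod_minimalPeriod_eq, Function.iterate_mod_minimalPeriod_eq, h]
    have := Function.iterate_injOn_Iio_minimalPeriod (f := f) (x := x)
      (Nat.mod_lt _ hpos : s % _ < _) (Nat.mod_lt _ hpos : t % _ < _) h1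
    rwa [Nat.ModEq, ← hp]
  · intro h
    rw [← Function.iterate_mod_minimalPeriod_eq (n := s),
      ← Function.iterate_mod_minimalPeriod_eq (n := t)]
    rw [hp]
    rw [Nat.ModEq] at h
    rw [h]

end Perm

section PiDyn
variable {A : Type*} {Q : A → Type*}

lemma iterate_pi (f : ∀ α, Q α → Q α) (n : ℕ) (x : ∀ α, Q α) (α : A) :
    (fun (y : ∀ α, Q α) α => f α (y α))^[n] x α = (f α)^[n] (x α) := by
  induction n generalizing x with
  | zero => rfl
  | succ n ih =>
    rw [Function.iterate_succ_apply, Function.iterate_succ_apply]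
    exact ih _

lemma pi_trans [∀ α, Finite (Q α)] (f : ∀ α, Q α → Q α) (F : Finset A)
    (hsub : ∀ α ∉ F, Subsingleton (Q α))
    (hbij : ∀ α ∈ F, Function.Bijective (f α))
    (htr : ∀ α ∈ F, Trans' (f α))
    (hcop : ∀ α ∈ F, ∀ β ∈ F, α ≠ β → Nat.Coprime (Nat.card (Q α)) (Nat.card (Q β))) :
    Trans' (fun (y : ∀ α, Q α) α => f α (y α)) := by
  classical
  intro a b
  have key : ∀ (F' : Finset A), F' ⊆ F → ∃ n : ℕ, ∀ α ∈ F', (f α)^[n] (a α) = b α := by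
    intro F'
    induction F' using Finset.induction_on with
    | empty => intro _; exact ⟨0, by simp⟩
    | @insert β s hβs ih =>
      intro hsubF
      have hsF : s ⊆ F := fun x hx => hsubF (Finset.mem_insert_of_mem hx)
      have hβF : β ∈ F := hsubF (Finset.mem_insert_self β s)
      obtain ⟨n₁, hn₁⟩ := ih hsF
      obtain ⟨t, ht⟩ := htr β hβF (a β) (b β)
      set P : ℕ := ∏ α ∈ s, Nat.card (Q α) with hP
      have hco : P.Coprime (Nat.card (Q β)) :=
        Nat.Coprime.prod_left (fun i hi => hcop i (hsF hi) β hβF (fun h => hβs (h ▸ hi)))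
      obtain ⟨n, hn_mod₁, hn_mod₂⟩ := Nat.chineseRemainder hco n₁ t
      refine ⟨n, fun α hα => ?_⟩
      rcases Finset.mem_insert.mp hα with h | h
      · subst h
        rw [(iterate_eq_iterate_iff (f α) (hbij α hβF) (htr α hβF) (a α)).mpr hn_mod₂]
        exact ht
      · have hdvd : Nat.card (Q α) ∣ P := Finset.dvd_prod_of_mem _ h
        have hmod : n ≡ n₁ [MOD Nat.card (Q α)] := Nat.ModEq.of_dvd hdvd hn_mod₁
        rw [(iterate_eq_iterate_iff (f α) (hbij α (hsF h)) (htr α (hsF h)) (a α)).mpr hmod]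
        exact hn₁ α h
  obtain ⟨n, hn⟩ := key F (le_refl F)
  refine ⟨n, funext fun α => ?_⟩
  rw [iterate_pi]
  by_cases h : α ∈ F
  · exact hn α h
  · exact (hsub α h).elim _ _

lemma coprime_of_pi_trans [∀ α, Finite (Q α)] [∀ α, Nonempty (Q α)]
    (f : ∀ α, Q α → Q α) {α β : A} (hab : α ≠ β)
    (hbij : ∀ γ, Function.Bijective (f γ))
    (ht : Trans' (fun (y : ∀ γ, Q γ) γ => f γ (y γ))) :
    Nat.Coprime (Nat.card (Q α)) (Nat.card (Q β)) := by
  classical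
  -- coordinate transitivity
  have htc : ∀ γ, Trans' (f γ) := by
    intro γ p q
    obtain ⟨z⟩ := (inferInstance : Nonempty (∀ γ, Q γ))
    obtain ⟨n, hn⟩ := ht (Function.update z γ p) (Function.update z γ q)
    refine ⟨n, ?_⟩
    have := congrFun hn γ
    rw [iterate_pi] at this
    simpa using this
  -- joint : find t with f α^[t] x0 = x0 and f β^[t] y0 = f β y0
  obtain ⟨z⟩ := (inferInstance : Nonempty (∀ γ, Q γ))
  set b : ∀ γ, Q γ := Function.update z β (f β (z β)) with hb
  obtain ⟨t, htz⟩ := ht z b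
  have hα : (f α)^[t] (z α) = z α := by
    have := congrFun htz α
    rw [iterate_pi] at this
    rw [this, hb, Function.update_of_ne hab]
  have hβ : (f β)^[t] (z β) = (f β)^[1] (z β) := by
    have := congrFun htz β
    rw [iterate_pi] at this
    rw [this, hb, Function.update_self]
    simp
  have h1 : Nat.card (Q α) ∣ t := card_dvd_of_fixed (f α) (hbij α) (htc α) hα
  have h2 : t ≡ 1 [MOD Nat.card (Q β)] :=
    (iterate_eq_iterate_iff (f β) (hbij β) (htc β) (z β)).mp hβ
  set d := Nat.gcd (Nat.card (Q α)) (Nat.card (Q β)) with hd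
  have hd1 : t ≡ 0 [MOD d] :=
    Nat.modEq_zero_iff_dvd.mpr (dvd_trans (Nat.gcd_dvd_left _ _) h1)
  have hd2 : t ≡ 1 [MOD d] := Nat.ModEq.of_dvd (Nat.gcd_dvd_right _ _) h2
  have : (0 : ℕ) ≡ 1 [MOD d] := hd1.symm.trans hd2
  have hdvd : d ∣ 1 := (Nat.modEq_zero_iff_dvd).mp this.symm
  exact Nat.dvd_one.mp hdvd

end PiDyn


section QuotientCells
variable {K : Type*} [Group K]

def cell (H : Subgroup K) (q : K ⧸ H) : Set K := QuotientGroup.mk ⁻¹' {q}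

lemma mem_cell {H : Subgroup K} {q : K ⧸ H} {x : K} :
    x ∈ cell H q ↔ (QuotientGroup.mk x : K ⧸ H) = q := Iff.rfl

lemma cell_mk (H : Subgroup K) (g : K) :
    cell H (QuotientGroup.mk g) = (fun x => g⁻¹ * x) ⁻¹' (H : Set K) := by
  ext x
  simp only [cell, Set.mem_preimage, Set.mem_singleton_iff, SetLike.mem_coe]
  rw [eq_comm, QuotientGroup.eq]

lemma self_mem_cell (H : Subgroup K) (g : K) : g ∈ cell H (QuotientGroup.mk g) := rfl

lemma cell_disjoint {H : Subgroup K} {q q' : K ⧸ H} (h : q ≠ q') :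
    Disjoint (cell H q) (cell H q') := by
  rw [Set.disjoint_left]
  intro x hx hx'
  exact h ((mem_cell.mp hx).symm.trans (mem_cell.mp hx'))

lemma cell_eq_of_mem {H : Subgroup K} {q : K ⧸ H} {x : K} (h : x ∈ cell H q) :
    cell H q = cell H (QuotientGroup.mk x) := by rw [mem_cell.mp h]

lemma cell_mono {H H' : Subgroup K} (hle : H ≤ H') (x : K) :
    cell H (QuotientGroup.mk x) ⊆ cell H' (QuotientGroup.mk x) := by
  intro y hy
  rw [mem_cell, eq_comm, QuotientGroup.eq] at hy ⊢
  exact hle hy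

lemma cell_inter (H H' : Subgroup K) (x : K) :
    cell H (QuotientGroup.mk x) ∩ cell H' (QuotientGroup.mk x)
      = cell (H ⊓ H') (QuotientGroup.mk x) := by
  ext y
  simp only [Set.mem_inter_iff, mem_cell, eq_comm (b := QuotientGroup.mk y), QuotientGroup.eq]
  exact (Subgroup.mem_inf).symm

def qmap (T : K → K) (H : Subgroup K) (h : MapFactorsThrough T H) : K ⧸ H → K ⧸ H :=
  Quotient.map' T (fun a b hab => by
    rw [QuotientGroup.leftRel_apply] at hab ⊢
    exact h a b hab)

lemma qmap_mk (T : K → K) (H : Subgroup K) (h : MapFactorsThrough T H) (x : K) :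
    qmap T H h (QuotientGroup.mk x) = QuotientGroup.mk (T x) := rfl

lemma preimage_mk_set (T : K → K) (H : Subgroup K) (h : MapFactorsThrough T H)
    (s : Set (K ⧸ H)) :
    T ⁻¹' (QuotientGroup.mk ⁻¹' s) = QuotientGroup.mk ⁻¹' (qmap T H h ⁻¹' s) := rfl

lemma preimage_cell (T : K → K) (H : Subgroup K) (h : MapFactorsThrough T H) (q : K ⧸ H) :
    T ⁻¹' (cell H q) = QuotientGroup.mk ⁻¹' (qmap T H h ⁻¹' {q}) := rfl

end QuotientCells

section MeasureCells
variable {K : Type*} [Group K] [TopologicalSpace K] [IsTopologicalGroup K] [CompactSpace K]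
  [MeasurableSpace K] [BorelSpace K]
  (μ : Measure K) [μ.IsHaarMeasure] [IsProbabilityMeasure μ]

lemma measurable_cell {H : Subgroup K} (hH : IsOpen (H : Set K)) (q : K ⧸ H) :
    MeasurableSet (cell H q) := by
  induction q using QuotientGroup.induction_on with
  | H g => rw [cell_mk]; exact ((continuous_mul_left g⁻¹).isOpen_preimage _ hH).measurableSet

lemma isOpen_cell {H : Subgroup K} (hH : IsOpen (H : Set K)) (q : K ⧸ H) :
    IsOpen (cell H q) := by
  induction q using QuotientGroup.induction_on with
  | H g => rw [cell_mk]; exact (continuous_mul_left g⁻¹).isOpen_preimage _ hH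

lemma measure_cell_const {H : Subgroup K} (q : K ⧸ H) : μ (cell H q) = μ (H : Set K) := by
  induction q using QuotientGroup.induction_on with
  | H g => rw [cell_mk]; exact measure_preimage_mul μ g⁻¹ _

lemma sum_cells {H : Subgroup K} (hH : IsOpen (H : Set K)) [Fintype (K ⧸ H)]
    {X : Set K} (hX : MeasurableSet X) :
    ∑ q : K ⧸ H, μ (X ∩ cell H q) = μ X := by
  have hun : X = ⋃ q ∈ (Finset.univ : Finset (K ⧸ H)), X ∩ cell H q := by
    ext x
    constructor
    · intro hx
      exact Set.mem_biUnion (Finset.mem_univ (QuotientGroup.mk x)) ⟨hx, rfl⟩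
    · intro hx
      obtain ⟨q, _, hq⟩ := Set.mem_iUnion₂.mp hx
      exact hq.1
  have hdisj : (↑(Finset.univ : Finset (K ⧸ H)) : Set (K ⧸ H)).PairwiseDisjoint
      (fun q => X ∩ cell H q) := by
    intro q _ q' _ hne
    exact (cell_disjoint hne).mono Set.inter_subset_right Set.inter_subset_right
  have := measure_biUnion_finset (μ := μ) hdisj (fun q _ => hX.inter (measurable_cell hH q))
  rw [← hun] at this
  exact this.symm

lemma measure_cell {H : Subgroup K} (hH : IsOpen (H : Set K)) (q : K ⧸ H) :
    μ (cell H q) = ((Nat.card (K ⧸ H) : ℝ≥0∞))⁻¹ := by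
  haveI : Finite (K ⧸ H) := Subgroup.quotient_finite_of_isOpen H hH
  haveI : Fintype (K ⧸ H) := Fintype.ofFinite _
  haveI : Nonempty (K ⧸ H) := ⟨QuotientGroup.mk 1⟩
  have h1 : ∑ p : K ⧸ H, μ (Set.univ ∩ cell H p) = μ Set.univ := sum_cells μ hH MeasurableSet.univ
  simp only [Set.univ_inter, measure_univ] at h1
  have h2 : ∀ p : K ⧸ H, μ (cell H p) = μ (H : Set K) := measure_cell_const μ
  rw [Finset.sum_congr rfl (fun p _ => h2 p), Finset.sum_const, Finset.card_univ,
    nsmul_eq_mul] at h1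
  have hk0 : ((Fintype.card (K ⧸ H) : ℝ≥0∞)) ≠ 0 := by
    simp [Fintype.card_ne_zero]
  have hktop : ((Fintype.card (K ⧸ H) : ℝ≥0∞)) ≠ ⊤ := ENNReal.natCast_ne_top _
  have : μ (H : Set K) = ((Fintype.card (K ⧸ H) : ℝ≥0∞))⁻¹ := by
    have := ENNReal.mul_inv_cancel hk0 hktop
    exact (ENNReal.mul_right_inj hk0 hktop).mp (by rw [h1, this])
  rw [measure_cell_const, this, Nat.card_eq_fintype_card]

end MeasureCells
section Dyn
variable {K : Type*} [Group K] [TopologicalSpace K] [IsTopologicalGroup K] [CompactSpace K]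
  [MeasurableSpace K] [BorelSpace K]
  (μ : Measure K) [μ.IsHaarMeasure] [IsProbabilityMeasure μ]

lemma card_quot_inv_ne_zero {H : Subgroup K} (hH : IsOpen (H : Set K)) :
    ((Nat.card (K ⧸ H) : ℝ≥0∞))⁻¹ ≠ 0 := by
  simp only [ne_eq, ENNReal.inv_eq_zero]
  exact ENNReal.natCast_ne_top _

lemma card_quot_inv_ne_top {H : Subgroup K} (hH : IsOpen (H : Set K)) :
    ((Nat.card (K ⧸ H) : ℝ≥0∞))⁻¹ ≠ ⊤ := by
  haveI : Finite (K ⧸ H) := Subgroup.quotient_finite_of_isOpen H hH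
  haveI : Nonempty (K ⧸ H) := ⟨QuotientGroup.mk 1⟩
  simp only [ne_eq, ENNReal.inv_eq_top]
  exact_mod_cast Nat.card_pos.ne'

theorem qmap_bijective_of_mp {T : K → K}
    (hmp : ∀ S : Set K, MeasurableSet S → μ (T ⁻¹' S) = μ S)
    {H : Subgroup K} (hH : IsOpen (H : Set K)) (hf : MapFactorsThrough T H) :
    Function.Bijective (qmap T H hf) := by
  haveI : Finite (K ⧸ H) := Subgroup.quotient_finite_of_isOpen H hH
  rw [← Finite.injective_iff_bijective]
  intro p p' hpp'
  by_contra hne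
  have hsub : cell H p ∪ cell H p' ⊆ T ⁻¹' (cell H (qmap T H hf p)) := by
    rw [preimage_cell]
    rintro x (hx | hx)
    · rw [Set.mem_preimage, Set.mem_preimage, mem_cell.mp hx]; rfl
    · rw [Set.mem_preimage, Set.mem_preimage, mem_cell.mp hx]
      simp only [Set.mem_singleton_iff]
      exact hpp'.symm
  have hμ := hmp _ (measurable_cell hH (qmap T H hf p))
  rw [measure_cell μ hH] at hμ
  have hle : μ (cell H p ∪ cell H p') ≤ ((Nat.card (K ⧸ H) : ℝ≥0∞))⁻¹ :=
    hμ ▸ measure_mono hsub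
  rw [measure_union (cell_disjoint hne) (measurable_cell hH p'), measure_cell μ hH,
    measure_cell μ hH] at hle
  exact absurd hle (not_le.mpr
    (ENNReal.lt_add_right (card_quot_inv_ne_top hH) (card_quot_inv_ne_zero hH)))

theorem qmap_trans_of_ergodic {T : K → K}
    (hmp : ∀ S : Set K, MeasurableSet S → μ (T ⁻¹' S) = μ S)
    (herg : ∀ S : Set K, MeasurableSet S → T ⁻¹' S = S → μ S = 0 ∨ μ S = 1)
    {H : Subgroup K} (hH : IsOpen (H : Set K)) (hf : MapFactorsThrough T H) :
    Trans' (qmap T H hf) := by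
  haveI : Finite (K ⧸ H) := Subgroup.quotient_finite_of_isOpen H hH
  intro a b
  set e := qmap T H hf with he
  have hbij := qmap_bijective_of_mp μ hmp hH hf
  obtain ⟨m, hm, hid⟩ := exists_iterate_id e hbij
  set O : Set (K ⧸ H) := {q | ∃ n : ℕ, e^[n] a = q} with hO
  have hOinv : e ⁻¹' O = O := by
    ext q
    constructor
    · rintro ⟨n, hn⟩
      refine ⟨m - 1 + n, ?_⟩
      rw [Function.iterate_add_apply, hn]
      have h2 : e^[m-1] (e q) = e^[m] q := by
        rw [← Function.iterate_succ_apply]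
        congr 1
        omega
      rw [h2, hid, id_eq]
    · rintro ⟨n, hn⟩
      exact ⟨n + 1, by rw [Function.iterate_succ_apply', hn]⟩
  set S : Set K := QuotientGroup.mk ⁻¹' O with hS
  have hScell : S = ⋃ q ∈ O, cell H q := by
    ext x
    simp only [hS, Set.mem_preimage, Set.mem_iUnion, mem_cell]
    exact ⟨fun h => ⟨_, h, rfl⟩, fun ⟨q, hq, h⟩ => h ▸ hq⟩
  have hSmeas : MeasurableSet S := by
    rw [hScell]
    exact MeasurableSet.biUnion (Set.to_countable O) (fun q _ => measurable_cell hH q)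
  have hSinv : T ⁻¹' S = S := by
    rw [hS, preimage_mk_set T H hf, ← he, hOinv]
  have haO : a ∈ O := ⟨0, rfl⟩
  have hpos : μ S ≠ 0 := by
    intro h0
    have : μ (cell H a) = 0 := by
      refine le_antisymm ?_ zero_le
      rw [← h0]
      refine measure_mono ?_
      rw [hScell]
      exact Set.subset_biUnion_of_mem haO
    rw [measure_cell μ hH] at this
    exact card_quot_inv_ne_zero hH this
  have hS1 : μ S = 1 := (herg S hSmeas hSinv).resolve_left hpos
  by_contra hb
  have hbO : b ∉ O := hb
  have hcompl : cell H b ⊆ Sᶜ := by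
    intro x hx hxS
    exact hbO ((mem_cell.mp hx) ▸ hxS)
  have h0 : μ Sᶜ = 0 := by
    rw [measure_compl hSmeas (measure_ne_top μ S), hS1, measure_univ, tsub_self]
  have : μ (cell H b) = 0 := le_antisymm (h0 ▸ measure_mono hcompl) zero_le
  rw [measure_cell μ hH] at this
  exact card_quot_inv_ne_zero hH this

end Dyn

section Family
variable {K : Type*} [Group K] [TopologicalSpace K] [IsTopologicalGroup K] [CompactSpace K]
  [T2Space K] [SecondCountableTopology K] [MeasurableSpace K] [BorelSpace K]
  (μ : Measure K) [μ.IsHaarMeasure] [IsProbabilityMeasure μ]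

/-- the coset basis attached to a family of subgroups -/
def basisSets (𝒩 : Set (Subgroup K)) : Set (Set K) :=
  {s | ∃ H ∈ 𝒩, ∃ g : K, s = cell H (QuotientGroup.mk g)}

/-- a good family of subgroups for `T` -/
structure GoodFam (T : K → K) (𝒩 : Set (Subgroup K)) : Prop where
  isOpen' : ∀ H ∈ 𝒩, IsOpen (H : Set K)
  fac : ∀ H ∈ 𝒩, MapFactorsThrough T H
  base : ∀ U ∈ nhds (1 : K), ∃ H ∈ 𝒩, (H : Set K) ⊆ U
  inter : ∀ H ∈ 𝒩, ∀ H' ∈ 𝒩, H ⊓ H' ∈ 𝒩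

variable {T : K → K} {𝒩 : Set (Subgroup K)}

lemma continuous_of_fam (hG : GoodFam T 𝒩) : Continuous T := by
  rw [continuous_iff_continuousAt]
  intro x
  rw [ContinuousAt, Filter.tendsto_def]
  intro U hU
  have h1 : (fun y => T x * y) ⁻¹' U ∈ nhds (1 : K) :=
    (continuous_mul_left (T x)).continuousAt.preimage_mem_nhds (by simpa using hU)
  obtain ⟨H, hH, hsub⟩ := hG.base _ h1
  refine Filter.mem_of_superset
    ((isOpen_cell (hG.isOpen' H hH) _).mem_nhds (self_mem_cell H x)) ?_
  intro y hy
  rw [mem_cell, eq_comm, QuotientGroup.eq] at hy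
  have h2 := hG.fac H hH x y hy
  have h3 := hsub h2
  simpa using h3

lemma isBasis_fam (hG : GoodFam T 𝒩) :
    TopologicalSpace.IsTopologicalBasis (basisSets 𝒩) := by
  refine TopologicalSpace.isTopologicalBasis_of_isOpen_of_nhds ?_ ?_
  · rintro u ⟨H, hH, g, rfl⟩
    exact isOpen_cell (hG.isOpen' H hH) _
  · intro x U hxU hU
    have h1 : (fun y => x * y) ⁻¹' U ∈ nhds (1 : K) :=
      (continuous_mul_left x).continuousAt.preimage_mem_nhds (by simpa using hU.mem_nhds hxU)
    obtain ⟨H, hH, hsub⟩ := hG.base _ h1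
    refine ⟨cell H (QuotientGroup.mk x), ⟨H, hH, x, rfl⟩, self_mem_cell H x, ?_⟩
    intro y hy
    rw [mem_cell, eq_comm, QuotientGroup.eq] at hy
    have := hsub hy
    simpa using this

lemma piSystem_fam (hG : GoodFam T 𝒩) : IsPiSystem (basisSets 𝒩) := by
  rintro s ⟨H, hH, g, rfl⟩ t ⟨H', hH', g', rfl⟩ hne
  obtain ⟨z, hz1, hz2⟩ := hne
  refine ⟨H ⊓ H', hG.inter H hH H' hH', z, ?_⟩
  rw [cell_eq_of_mem hz1, cell_eq_of_mem hz2, cell_inter]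

lemma meas_eq_fam (hG : GoodFam T 𝒩) :
    (inferInstance : MeasurableSpace K) = MeasurableSpace.generateFrom (basisSets 𝒩) := by
  rw [BorelSpace.measurable_eq (α := K)]
  exact (isBasis_fam hG).borel_eq_generateFrom

theorem mp_of_family (hG : GoodFam T 𝒩)
    (hbij : ∀ H, ∀ hH : H ∈ 𝒩, Function.Bijective (qmap T H (hG.fac H hH))) :
    ∀ S : Set K, MeasurableSet S → μ (T ⁻¹' S) = μ S := by
  have hTm : Measurable T := (continuous_of_fam hG).measurable
  have hmap : Measure.map T μ = μ := by
    refine ext_of_generate_finite _ (meas_eq_fam hG) (piSystem_fam hG) ?_ ?_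
    · rintro s ⟨H, hH, g, rfl⟩
      rw [Measure.map_apply hTm (measurable_cell (hG.isOpen' H hH) _),
        preimage_cell T H (hG.fac H hH)]
      set e := Equiv.ofBijective _ (hbij H hH) with hee
      have hpre : qmap T H (hG.fac H hH) ⁻¹' {(QuotientGroup.mk g : K ⧸ H)}
          = {e.symm (QuotientGroup.mk g)} := by
        ext p
        simp only [Set.mem_preimage, Set.mem_singleton_iff]
        constructor
        · intro h; exact ((Equiv.symm_apply_eq e).mpr h.symm).symm
        · intro h; subst h; exact e.apply_symm_apply _
      rw [hpre]
      show μ (cell H (e.symm (QuotientGroup.mk g))) = μ (cell H (QuotientGroup.mk g))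
      rw [measure_cell μ (hG.isOpen' H hH), measure_cell μ (hG.isOpen' H hH)]
    · rw [Measure.map_apply hTm MeasurableSet.univ]
      simp
  intro S hS
  conv_rhs => rw [← hmap, Measure.map_apply hTm hS]

lemma exists_refinement (hG : GoodFam T 𝒩) (Bf : Finset (Set K))
    (hBf : ∀ v ∈ Bf, v ∈ basisSets 𝒩) :
    ∃ H ∈ 𝒩, ∀ v ∈ Bf, ∀ x ∈ v, cell H (QuotientGroup.mk x) ⊆ v := by
  classical
  induction Bf using Finset.induction_on with
  | empty =>
    obtain ⟨H, hH, -⟩ := hG.base Set.univ Filter.univ_mem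
    exact ⟨H, hH, by simp⟩
  | @insert v s hvs ih =>
    obtain ⟨H₁, hH₁, hP₁⟩ := ih (fun w hw => hBf w (Finset.mem_insert_of_mem hw))
    obtain ⟨H₂, hH₂, g, hveq⟩ := hBf v (Finset.mem_insert_self v s)
    refine ⟨H₁ ⊓ H₂, hG.inter _ hH₁ _ hH₂, ?_⟩
    intro w hw x hx
    rcases Finset.mem_insert.mp hw with rfl | h
    · have hx2 : x ∈ cell H₂ (QuotientGroup.mk g) := hveq ▸ hx
      have : cell H₂ (QuotientGroup.mk g) = cell H₂ (QuotientGroup.mk x) := cell_eq_of_mem hx2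
      rw [hveq, this]
      exact cell_mono inf_le_right x
    · exact (cell_mono inf_le_left x).trans (hP₁ w h x hx)

theorem ergodic_of_family (hG : GoodFam T 𝒩)
    (hmp : ∀ S : Set K, MeasurableSet S → μ (T ⁻¹' S) = μ S)
    (htrans : ∀ H, ∀ hH : H ∈ 𝒩, Trans' (qmap T H (hG.fac H hH))) :
    ∀ S : Set K, MeasurableSet S → T ⁻¹' S = S → μ S = 0 ∨ μ S = 1 := by
  intro S hS hinv
  by_contra hcon
  push_neg at hcon
  obtain ⟨h0, h1⟩ := hcon
  haveI : TopologicalSpace.MetrizableSpace K :=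
    TopologicalSpace.metrizableSpace_of_t3_secondCountable K
  have hμS_le : μ S ≤ 1 := prob_le_one
  set ε : ℝ≥0∞ := min (μ S) (1 - μ S) with hε
  have hμS_lt : μ S < 1 := lt_of_le_of_ne hμS_le h1
  have hpos : 0 < ε := lt_min (pos_iff_ne_zero.mpr h0) (tsub_pos_iff_lt.mpr hμS_lt)
  have hε0 : ε ≠ 0 := hpos.ne'
  have hε2 : ε / 2 ≠ 0 := by
    simp [ENNReal.div_eq_zero_iff, hε0]
  obtain ⟨Kc, hKsub, hKcomp, hKlt⟩ := hS.exists_isCompact_diff_lt (measure_ne_top μ S) hε2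
  obtain ⟨U, hUsup, hUopen, hUtop, hUlt⟩ := hS.exists_isOpen_diff_lt (measure_ne_top μ S) hε2
  have hcov : Kc ⊆ ⋃ v ∈ {v : Set K | v ∈ basisSets 𝒩 ∧ v ⊆ U}, v := by
    intro x hx
    obtain ⟨v, hv, hxv, hvU⟩ := (isBasis_fam hG).exists_subset_of_mem_open (hUsup (hKsub hx)) hUopen
    exact Set.mem_biUnion ⟨hv, hvU⟩ hxv
  obtain ⟨B, hBsub, hBfin, hKcov⟩ := hKcomp.elim_finite_subcover_image
    (fun v hv => (isBasis_fam hG).isOpen hv.1) hcov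
  classical
  set Bf := hBfin.toFinset with hBfdef
  have hBf_mem : ∀ v ∈ Bf, v ∈ basisSets 𝒩 := fun v hv => (hBsub ((hBfin.mem_toFinset).mp hv)).1
  have hBf_U : ∀ v ∈ Bf, v ⊆ U := fun v hv => (hBsub ((hBfin.mem_toFinset).mp hv)).2
  obtain ⟨H, hH, href⟩ := exists_refinement hG Bf hBf_mem
  set C : Set K := ⋃ v ∈ Bf, v with hC
  have hKC : Kc ⊆ C := by
    intro x hx
    obtain ⟨v, hv, hxv⟩ := Set.mem_iUnion₂.mp (hKcov hx)
    exact Set.mem_biUnion ((hBfin.mem_toFinset).mpr hv) hxv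
  have hCU : C ⊆ U := Set.iUnion₂_subset hBf_U
  have hCcells : ∀ q : K ⧸ H, (cell H q ∩ C).Nonempty → cell H q ⊆ C := by
    rintro q ⟨z, hz1, hz2⟩
    obtain ⟨v, hv, hzv⟩ := Set.mem_iUnion₂.mp hz2
    have h1 : cell H q = cell H (QuotientGroup.mk z) := cell_eq_of_mem hz1
    have h2 : cell H (QuotientGroup.mk z) ⊆ v := href v hv z hzv
    have h3 : v ⊆ C := by
      rw [hC]
      exact Set.subset_biUnion_of_mem (u := fun v => v) hv
    exact h1 ▸ h2.trans h3
  have hCopen : IsOpen C := isOpen_biUnion (fun v hv => (isBasis_fam hG).isOpen (hBf_mem v hv))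
  have hCmeas : MeasurableSet C := hCopen.measurableSet
  have hHopen := hG.isOpen' H hH
  haveI : Finite (K ⧸ H) := Subgroup.quotient_finite_of_isOpen H hHopen
  haveI : Fintype (K ⧸ H) := Fintype.ofFinite _
  haveI : Nonempty (K ⧸ H) := ⟨QuotientGroup.mk 1⟩
  set k : ℕ := Nat.card (K ⧸ H) with hk
  have hk0 : (k : ℝ≥0∞) ≠ 0 := by exact_mod_cast Nat.card_pos.ne'
  have hktop : (k : ℝ≥0∞) ≠ ⊤ := ENNReal.natCast_ne_top _
  set e := qmap T H (hG.fac H hH) with he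
  have hbij : Function.Bijective e := qmap_bijective_of_mp μ hmp hHopen (hG.fac H hH)
  have hstep : ∀ q, μ (S ∩ cell H (e q)) = μ (S ∩ cell H q) := by
    intro q
    have hpre : T ⁻¹' (S ∩ cell H (e q)) = S ∩ cell H q := by
      rw [Set.preimage_inter, hinv, preimage_cell T H (hG.fac H hH)]
      have heq : e ⁻¹' {e q} = {q} := by
        ext p
        simp only [Set.mem_preimage, Set.mem_singleton_iff]
        exact ⟨fun h => hbij.1 h, fun h => h ▸ rfl⟩
      rw [← he, heq]
      rfl
    have hmpe := hmp _ (hS.inter (measurable_cell hHopen (e q)))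
    rw [hpre] at hmpe
    exact hmpe.symm
  have hconst : ∀ q q', μ (S ∩ cell H q) = μ (S ∩ cell H q') := by
    intro q q'
    obtain ⟨n, hn⟩ := htrans H hH q q'
    rw [← hn]
    clear hn
    induction n with
    | zero => rfl
    | succ n ih => rw [Function.iterate_succ_apply', hstep]; exact ih
  have hsum : ∀ q, (k : ℝ≥0∞) * μ (S ∩ cell H q) = μ S := by
    intro q
    have hs := sum_cells μ hHopen hS
    rw [Finset.sum_congr rfl (fun p _ => hconst p q), Finset.sum_const, Finset.card_univ,
      nsmul_eq_mul, ← Nat.card_eq_fintype_card] at hs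
    exact hs
  set D : Set K := (S \ C) ∪ (C \ S) with hD
  have hDmeas : MeasurableSet D := (hS.diff hCmeas).union (hCmeas.diff hS)
  have hcell_lower : ∀ q : K ⧸ H, ε / k ≤ μ (D ∩ cell H q) := by
    intro q
    have hcellq := measure_cell μ hHopen q
    by_cases hq : cell H q ⊆ C
    · have hsub : cell H q \ S ⊆ D ∩ cell H q := fun x hx => ⟨Or.inr ⟨hq hx.1, hx.2⟩, hx.1⟩
      refine le_trans ?_ (measure_mono hsub)
      have hadd : μ (cell H q ∩ S) + μ (cell H q \ S) = μ (cell H q) :=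
        measure_inter_add_diff _ hS
      have hkm : (k : ℝ≥0∞) * μ (cell H q \ S) = 1 - μ S := by
        have h2 : (k:ℝ≥0∞) * μ (cell H q ∩ S) + (k:ℝ≥0∞) * μ (cell H q \ S) = 1 := by
          rw [← mul_add, hadd, hcellq]
          exact ENNReal.mul_inv_cancel hk0 hktop
        rw [Set.inter_comm, hsum q] at h2
        rw [add_comm] at h2
        exact ENNReal.eq_sub_of_add_eq (ne_top_of_le_ne_top ENNReal.one_ne_top hμS_le) h2
      have hεle : ε ≤ (k:ℝ≥0∞) * μ (cell H q \ S) := hkm ▸ min_le_right _ _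
      exact (ENNReal.mul_le_mul_iff_right hk0 hktop).mp
        (by rw [ENNReal.mul_div_cancel hk0 hktop]; exact hεle)
    · have hdisj : cell H q ∩ C = ∅ := by
        by_contra hne
        exact hq (hCcells q (Set.nonempty_iff_ne_empty.mpr hne))
      have hsub : S ∩ cell H q ⊆ D ∩ cell H q := by
        rintro x ⟨hxS, hxc⟩
        refine ⟨Or.inl ⟨hxS, fun hxC => ?_⟩, hxc⟩
        exact absurd (Set.mem_inter hxc hxC) (by rw [hdisj]; exact Set.notMem_empty x)
      refine le_trans ?_ (measure_mono hsub)
      have hεle : ε ≤ (k:ℝ≥0∞) * μ (S ∩ cell H q) := (hsum q) ▸ min_le_left _ _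
      exact (ENNReal.mul_le_mul_iff_right hk0 hktop).mp
        (by rw [ENNReal.mul_div_cancel hk0 hktop]; exact hεle)
  have hlower : ε ≤ μ D := by
    have hs := sum_cells μ hHopen hDmeas
    calc ε = (k:ℝ≥0∞) * (ε / k) := (ENNReal.mul_div_cancel hk0 hktop).symm
    _ = ∑ _q : K ⧸ H, ε / k := by
        rw [Finset.sum_const, Finset.card_univ, nsmul_eq_mul, ← Nat.card_eq_fintype_card]
    _ ≤ ∑ q : K ⧸ H, μ (D ∩ cell H q) := Finset.sum_le_sum (fun q _ => hcell_lower q)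
    _ = μ D := hs
  have hupper : μ D < ε := by
    have hDsub : D ⊆ (S \ Kc) ∪ (U \ S) := by
      rintro x (⟨hxS, hxC⟩ | ⟨hxC, hxS⟩)
      · exact Or.inl ⟨hxS, fun hxK => hxC (hKC hxK)⟩
      · exact Or.inr ⟨hCU hxC, hxS⟩
    calc μ D ≤ μ ((S \ Kc) ∪ (U \ S)) := measure_mono hDsub
    _ ≤ μ (S \ Kc) + μ (U \ S) := measure_union_le _ _
    _ < ε / 2 + ε / 2 := ENNReal.add_lt_add hKlt hUlt
    _ = ε := ENNReal.add_halves ε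
  exact absurd hlower (not_le.mpr hupper)

end Family

section Conj
variable {X Y : Type*}

lemma iterate_conj (φ : X → Y) (f : X → X) (g : Y → Y)
    (hcomm : ∀ x, φ (f x) = g (φ x)) (n : ℕ) (x : X) : φ (f^[n] x) = g^[n] (φ x) := by
  induction n generalizing x with
  | zero => rfl
  | succ n ih =>
    rw [Function.iterate_succ_apply, Function.iterate_succ_apply, ← hcomm]
    exact ih (f x)

lemma trans_conj (φ : X → Y) (hφ : Function.Surjective φ) (f : X → X) (g : Y → Y)
    (hcomm : ∀ x, φ (f x) = g (φ x)) (hf : Trans' f) : Trans' g := by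
  intro a' b'
  obtain ⟨a, rfl⟩ := hφ a'
  obtain ⟨b, rfl⟩ := hφ b'
  obtain ⟨n, hn⟩ := hf a b
  exact ⟨n, by rw [← iterate_conj φ f g hcomm, hn]⟩

lemma trans_conj' (φ : X → Y) (hφ : Function.Bijective φ) (f : X → X) (g : Y → Y)
    (hcomm : ∀ x, φ (f x) = g (φ x)) (hg : Trans' g) : Trans' f := by
  intro a b
  obtain ⟨n, hn⟩ := hg (φ a) (φ b)
  refine ⟨n, hφ.1 ?_⟩
  rw [iterate_conj φ f g hcomm, hn]

lemma bij_conj (φ : X → Y) (hφ : Function.Bijective φ) (f : X → X) (g : Y → Y)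
    (hcomm : ∀ x, φ (f x) = g (φ x)) (hf : Function.Bijective f) : Function.Bijective g := by
  constructor
  · intro y y' h
    obtain ⟨x, rfl⟩ := hφ.2 y
    obtain ⟨x', rfl⟩ := hφ.2 y'
    rw [← hcomm, ← hcomm] at h
    exact congrArg φ (hf.1 (hφ.1 h))
  · intro y
    obtain ⟨x, rfl⟩ := hφ.2 y
    obtain ⟨x', hx'⟩ := hf.2 x
    exact ⟨φ x', by rw [← hcomm, hx']⟩

lemma bij_conj' (φ : X → Y) (hφ : Function.Bijective φ) (f : X → X) (g : Y → Y)
    (hcomm : ∀ x, φ (f x) = g (φ x)) (hg : Function.Bijective g) : Function.Bijective f := by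
  constructor
  · intro x x' h
    exact hφ.1 (hg.1 (by rw [← hcomm, ← hcomm, h]))
  · intro x
    obtain ⟨y, hy⟩ := hg.2 (φ x)
    obtain ⟨x', rfl⟩ := hφ.2 y
    rw [← hcomm] at hy
    exact ⟨x', hφ.1 hy⟩

end Conj

section PiMapBij
variable {A : Type*} {Q : A → Type*} [∀ α, Nonempty (Q α)]

lemma pi_map_bij_coord (f : ∀ α, Q α → Q α)
    (h : Function.Bijective (fun (x : ∀ α, Q α) α => f α (x α))) (α : A) :
    Function.Bijective (f α) := by
  classical
  obtain ⟨z⟩ := (inferInstance : Nonempty (∀ α, Q α))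
  constructor
  · intro a b hab
    have h1 := h.1 (a₁ := Function.update z α a) (a₂ := Function.update z α b) (by
      funext γ
      by_cases hγ : γ = α
      · subst hγ; simp [hab]
      · simp [Function.update_of_ne hγ])
    have h2 := congrFun h1 α
    simpa using h2
  · intro b
    obtain ⟨x, hx⟩ := h.2 (Function.update z α b)
    refine ⟨x α, ?_⟩
    have h2 := congrFun hx α
    simpa using h2

lemma pi_trans_coord (f : ∀ α, Q α → Q α)
    (h : Trans' (fun (x : ∀ α, Q α) α => f α (x α))) (α : A) : Trans' (f α) :=
  trans_conj (fun x => x α) (fun a => by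
      obtain ⟨z⟩ := (inferInstance : Nonempty (∀ α, Q α))
      classical
      exact ⟨Function.update z α a, Function.update_self _ _ _⟩)
    _ (f α) (fun x => rfl) h

end PiMapBij

section PiGroup
variable {A : Type*} {G : A → Type*} [∀ α, Group (G α)]

lemma mem_piSub (N : ∀ α, Subgroup (G α)) (x : ∀ α, G α) :
    x ∈ Subgroup.pi Set.univ N ↔ ∀ α, x α ∈ N α := by
  simp [Subgroup.mem_pi]

def piQuot (N : ∀ α, Subgroup (G α))
    (p : (∀ α, G α) ⧸ Subgroup.pi Set.univ N) : ∀ α, G α ⧸ N α :=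
  Quotient.liftOn' p (fun x α => QuotientGroup.mk (x α)) (by
    intro a b hab
    rw [QuotientGroup.leftRel_apply] at hab
    funext α
    rw [QuotientGroup.eq]
    exact (mem_piSub N _).mp hab α)

lemma piQuot_mk (N : ∀ α, Subgroup (G α)) (x : ∀ α, G α) :
    piQuot N (QuotientGroup.mk x) = fun α => QuotientGroup.mk (x α) := rfl

lemma piQuot_bijective (N : ∀ α, Subgroup (G α)) : Function.Bijective (piQuot N) := by
  constructor
  · intro p q
    induction p using QuotientGroup.induction_on with | H x =>
    induction q using QuotientGroup.induction_on with | H y =>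
    intro h
    rw [QuotientGroup.eq, mem_piSub]
    intro α
    rw [piQuot_mk, piQuot_mk] at h
    exact (QuotientGroup.eq).mp (congrFun h α)
  · intro q
    refine ⟨QuotientGroup.mk (fun α => (q α).out), ?_⟩
    rw [piQuot_mk]
    funext α
    exact QuotientGroup.out_eq' (q α)

lemma piQuot_comm (N : ∀ α, Subgroup (G α)) (T : ∀ α, G α → G α)
    (hf : ∀ α, MapFactorsThrough (T α) (N α))
    (hfp : MapFactorsThrough (fun (x : ∀ α, G α) α => T α (x α)) (Subgroup.pi Set.univ N))
    (p : (∀ α, G α) ⧸ Subgroup.pi Set.univ N) :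
    piQuot N (qmap _ _ hfp p)
      = (fun (q : ∀ α, G α ⧸ N α) α => qmap (T α) (N α) (hf α) (q α)) (piQuot N p) := by
  induction p using QuotientGroup.induction_on with | H x => rfl

lemma coe_piSub (N : ∀ α, Subgroup (G α)) (F : Finset A) (htop : ∀ α ∉ F, N α = ⊤) :
    ((Subgroup.pi Set.univ N : Subgroup (∀ α, G α)) : Set (∀ α, G α))
      = Set.pi (↑F) (fun α => (N α : Set (G α))) := by
  ext x
  simp only [SetLike.mem_coe, mem_piSub, Set.mem_pi, Finset.mem_coe]
  constructor
  · intro h α _; exact h α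
  · intro h α
    by_cases hα : α ∈ F
    · exact h α hα
    · rw [htop α hα]; trivial

lemma piSub_inf (N N' : ∀ α, Subgroup (G α)) :
    Subgroup.pi Set.univ N ⊓ Subgroup.pi Set.univ N'
      = Subgroup.pi Set.univ (fun α => N α ⊓ N' α) := by
  ext x
  simp only [Subgroup.mem_inf, mem_piSub]
  exact ⟨fun ⟨h1, h2⟩ α => ⟨h1 α, h2 α⟩, fun h => ⟨fun α => (h α).1, fun α => (h α).2⟩⟩

lemma piSub_factors (N : ∀ α, Subgroup (G α)) (T : ∀ α, G α → G α)
    (hf : ∀ α, MapFactorsThrough (T α) (N α)) :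
    MapFactorsThrough (fun (x : ∀ α, G α) α => T α (x α)) (Subgroup.pi Set.univ N) := by
  intro x y hxy
  rw [mem_piSub] at hxy ⊢
  intro α
  exact hf α (x α) (y α) (hxy α)

lemma qmap_bij_congr {K : Type*} [Group K] {T : K → K} {H H' : Subgroup K} (h : H = H')
    (hf : MapFactorsThrough T H) (hf' : MapFactorsThrough T H') :
    Function.Bijective (qmap T H hf) ↔ Function.Bijective (qmap T H' hf') := by
  subst h; rfl

lemma qmap_trans_congr {K : Type*} [Group K] {T : K → K} {H H' : Subgroup K} (h : H = H')
    (hf : MapFactorsThrough T H) (hf' : MapFactorsThrough T H') :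
    Trans' (qmap T H hf) ↔ Trans' (qmap T H' hf') := by
  subst h; rfl

end PiGroup

section Adm
variable {Kk : Type*} [Group Kk] [TopologicalSpace Kk]

lemma adm_inf {T : Kk → Kk} {N N' : Subgroup Kk}
    (h : N.Normal ∧ IsOpen (N : Set Kk) ∧ MapFactorsThrough T N)
    (h' : N'.Normal ∧ IsOpen (N' : Set Kk) ∧ MapFactorsThrough T N') :
    (N ⊓ N').Normal ∧ IsOpen ((N ⊓ N' : Subgroup Kk) : Set Kk)
      ∧ MapFactorsThrough T (N ⊓ N') := by
  refine ⟨⟨fun n hn g => ?_⟩, ?_, ?_⟩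
  · rw [Subgroup.mem_inf] at hn ⊢
    exact ⟨h.1.conj_mem _ hn.1 g, h'.1.conj_mem _ hn.2 g⟩
  · rw [Subgroup.coe_inf]
    exact h.2.1.inter h'.2.1
  · intro x y hxy
    rw [Subgroup.mem_inf] at hxy ⊢
    exact ⟨h.2.2 x y hxy.1, h'.2.2 x y hxy.2⟩

lemma adm_top (T : Kk → Kk) :
    (⊤ : Subgroup Kk).Normal ∧ IsOpen ((⊤ : Subgroup Kk) : Set Kk)
      ∧ MapFactorsThrough T (⊤ : Subgroup Kk) := by
  refine ⟨inferInstance, ?_, fun x y _ => Subgroup.mem_top _⟩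
  rw [Subgroup.coe_top]
  exact isOpen_univ

end Adm

end S17

open S17 in
theorem stmt17 {A : Type*} [Countable A] (G : A → Type*) [∀ α, Group (G α)]
    [∀ α, TopologicalSpace (G α)] [∀ α, IsTopologicalGroup (G α)]
    [∀ α, CompactSpace (G α)] [∀ α, T2Space (G α)] [∀ α, TotallyDisconnectedSpace (G α)]
    [∀ α, SecondCountableTopology (G α)]
    [∀ α, MeasurableSpace (G α)] [∀ α, BorelSpace (G α)]
    (μa : ∀ α, Measure (G α)) [∀ α, (μa α).IsHaarMeasure]
    [∀ α, IsProbabilityMeasure (μa α)]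
    -- μ is the product measure, i.e. the normalized Haar measure on the product group
    (μ : Measure (∀ α, G α)) [μ.IsHaarMeasure] [IsProbabilityMeasure μ]
    (T : ∀ α, G α → G α) (hT : ∀ α, QuotientPreserving (T α)) :
    -- the product map is measure-preserving and ergodic
    ((∀ S : Set (∀ α, G α), MeasurableSet S →
        μ ((fun (x : ∀ α, G α) α => T α (x α)) ⁻¹' S) = μ S) ∧
      (∀ S : Set (∀ α, G α), MeasurableSet S →
        (fun (x : ∀ α, G α) α => T α (x α)) ⁻¹' S = S → μ S = 0 ∨ μ S = 1)) ↔
    -- iff each factor is measure-preserving and ergodic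
    ((∀ α, (∀ S : Set (G α), MeasurableSet S → μa α (T α ⁻¹' S) = μa α S) ∧
        (∀ S : Set (G α), MeasurableSet S → T α ⁻¹' S = S → μa α S = 0 ∨ μa α S = 1)) ∧
      -- and the indices in the finite factor sets are pairwise coprime
      (∀ α β, α ≠ β → ∀ (N : Subgroup (G α)) (M : Subgroup (G β)),
        (N.Normal ∧ IsOpen (N : Set (G α)) ∧ MapFactorsThrough (T α) N) →
        (M.Normal ∧ IsOpen (M : Set (G β)) ∧ MapFactorsThrough (T β) M) →
        Nat.Coprime N.index M.index)) := by
  classical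
  set TT : (∀ α, G α) → (∀ α, G α) := fun x α => T α (x α) with hTT
  -- the family of admissible subgroups at each coordinate
  set 𝒩a : ∀ α, Set (Subgroup (G α)) :=
    fun α => {N | N.Normal ∧ IsOpen (N : Set (G α)) ∧ MapFactorsThrough (T α) N} with h𝒩a
  -- the family of admissible product subgroups
  set 𝒩G : Set (Subgroup (∀ α, G α)) :=
    {H | ∃ (F : Finset A) (N : ∀ α, Subgroup (G α)),
      (∀ α, (N α).Normal ∧ IsOpen (N α : Set (G α)) ∧ MapFactorsThrough (T α) (N α)) ∧
      (∀ α ∉ F, N α = ⊤) ∧ H = Subgroup.pi Set.univ N} with h𝒩G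
  have hGa : ∀ α, GoodFam (T α) (𝒩a α) := by
    intro α
    refine ⟨fun N hN => hN.2.1, fun N hN => hN.2.2, ?_, ?_⟩
    · intro U hU
      obtain ⟨N, h1, h2, h3, h4⟩ := hT α U hU
      exact ⟨N, ⟨h1, h2, h4⟩, h3⟩
    · intro N hN N' hN'
      exact adm_inf hN hN'
  have hGprod : GoodFam TT 𝒩G := by
    constructor
    · rintro H ⟨F, N, hN, htop, rfl⟩
      rw [coe_piSub N F htop]
      exact isOpen_set_pi F.finite_toSet (fun α _ => (hN α).2.1)
    · rintro H ⟨F, N, hN, htop, rfl⟩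
      exact piSub_factors N T (fun α => (hN α).2.2)
    · intro U hU
      rw [nhds_pi] at hU
      obtain ⟨I, hIfin, t, ht, htsub⟩ := Filter.mem_pi.mp hU
      have ht1 : ∀ α, t α ∈ nhds (1 : G α) := fun α => ht α
      choose NN hNN using fun α => hT α (t α) (ht1 α)
      set N : ∀ α, Subgroup (G α) := fun α => if α ∈ I then NN α else ⊤ with hNdef
      refine ⟨Subgroup.pi Set.univ N, ⟨hIfin.toFinset, N, ?_, ?_, rfl⟩, ?_⟩
      · intro α
        by_cases hα : α ∈ I
        · simp only [hNdef, if_pos hα]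
          exact ⟨(hNN α).1, (hNN α).2.1, (hNN α).2.2.2⟩
        · simp only [hNdef, if_neg hα]
          exact adm_top (T α)
      · intro α hα
        have : α ∉ I := by simpa using hα
        simp only [hNdef, if_neg this]
      · intro x hx
        apply htsub
        intro α hα
        have hm : x α ∈ N α := (mem_piSub N x).mp hx α
        rw [hNdef] at hm
        simp only [if_pos hα] at hm
        exact (hNN α).2.2.1 hm
    · rintro H ⟨F, N, hN, htop, rfl⟩ H' ⟨F', N', hN', htop', rfl⟩
      refine ⟨F ∪ F', fun α => N α ⊓ N' α, ?_, ?_, piSub_inf N N'⟩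
      · intro α
        exact adm_inf (hN α) (hN' α)
      · intro α hα
        rw [Finset.mem_union, not_or] at hα
        show N α ⊓ N' α = ⊤
        rw [htop α hα.1, htop' α hα.2, inf_idem]
  have hQne : ∀ (γ : A) (N : Subgroup (G γ)), Nonempty (G γ ⧸ N) :=
    fun γ N => ⟨QuotientGroup.mk 1⟩
  constructor
  · -- forward direction
    rintro ⟨hmpP, hergP⟩
    -- key: at each coordinate, every admissible subgroup has bijective transitive quotient map
    have key : ∀ (α : A) (N : Subgroup (G α))
        (hadm : N.Normal ∧ IsOpen (N : Set (G α)) ∧ MapFactorsThrough (T α) N),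
        Function.Bijective (qmap (T α) N hadm.2.2) ∧ Trans' (qmap (T α) N hadm.2.2) := by
      intro α N hadm
      set NN : ∀ γ, Subgroup (G γ) :=
        Function.update (fun γ => (⊤ : Subgroup (G γ))) α N with hNNdef
      have hNNα : NN α = N := by rw [hNNdef]; simp
      have hNNγ : ∀ γ, γ ≠ α → NN γ = ⊤ := fun γ h => by
        rw [hNNdef]; simp [Function.update_of_ne h]
      have hadmNN : ∀ γ, (NN γ).Normal ∧ IsOpen ((NN γ) : Set (G γ))
          ∧ MapFactorsThrough (T γ) (NN γ) := by
        intro γ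
        by_cases hγ : γ = α
        · subst hγ; rw [hNNα]; exact hadm
        · rw [hNNγ γ hγ]; exact adm_top (T γ)
      have hfacNN : ∀ γ, MapFactorsThrough (T γ) (NN γ) := fun γ => (hadmNN γ).2.2
      have hfacH : MapFactorsThrough TT (Subgroup.pi Set.univ NN) :=
        piSub_factors NN T hfacNN
      have hopenH : IsOpen ((Subgroup.pi Set.univ NN : Subgroup (∀ γ, G γ)) : Set (∀ γ, G γ)) := by
        rw [coe_piSub NN {α} (fun γ hγ => hNNγ γ (by simpa using hγ))]
        exact isOpen_set_pi (Finset.finite_toSet _) (fun γ _ => (hadmNN γ).2.1)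
      have hbijH : Function.Bijective (qmap TT _ hfacH) :=
        qmap_bijective_of_mp μ hmpP hopenH hfacH
      have htrH : Trans' (qmap TT _ hfacH) :=
        qmap_trans_of_ergodic μ hmpP hergP hopenH hfacH
      haveI : ∀ γ, Nonempty (G γ ⧸ NN γ) := fun γ => hQne γ (NN γ)
      have hcomm := piQuot_comm NN T hfacNN hfacH
      have hbijPi : Function.Bijective
          (fun (q : ∀ γ, G γ ⧸ NN γ) γ => qmap (T γ) (NN γ) (hfacNN γ) (q γ)) :=
        bij_conj _ (piQuot_bijective NN) _ _ hcomm hbijH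
      have htrPi : Trans'
          (fun (q : ∀ γ, G γ ⧸ NN γ) γ => qmap (T γ) (NN γ) (hfacNN γ) (q γ)) :=
        trans_conj _ (piQuot_bijective NN).2 _ _ hcomm htrH
      have hbijα := pi_map_bij_coord _ hbijPi α
      have htrα := pi_trans_coord _ htrPi α
      exact ⟨(qmap_bij_congr hNNα (hfacNN α) hadm.2.2).mp hbijα,
        (qmap_trans_congr hNNα (hfacNN α) hadm.2.2).mp htrα⟩
    have hmpa : ∀ α, ∀ S : Set (G α), MeasurableSet S → μa α (T α ⁻¹' S) = μa α S := by
      intro α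
      exact mp_of_family (μa α) (hGa α) (fun N hN => (key α N hN).1)
    refine ⟨fun α => ⟨hmpa α, ?_⟩, ?_⟩
    · exact ergodic_of_family (μa α) (hGa α) (hmpa α) (fun N hN => (key α N hN).2)
    · -- coprimality
      intro α β hne N M hNadm hMadm
      set NN : ∀ γ, Subgroup (G γ) :=
        Function.update (Function.update (fun γ => (⊤ : Subgroup (G γ))) α N) β M with hNNdef
      have hNNα : NN α = N := by
        rw [hNNdef]; simp [Function.update_of_ne hne]
      have hNNβ : NN β = M := by rw [hNNdef]; simp
      have hNNγ : ∀ γ, γ ≠ α → γ ≠ β → NN γ = ⊤ := fun γ h1 h2 => by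
        rw [hNNdef]; simp [Function.update_of_ne h1, Function.update_of_ne h2]
      have hadmNN : ∀ γ, (NN γ).Normal ∧ IsOpen ((NN γ) : Set (G γ))
          ∧ MapFactorsThrough (T γ) (NN γ) := by
        intro γ
        by_cases h1 : γ = α
        · subst h1; rw [hNNα]; exact hNadm
        by_cases h2 : γ = β
        · subst h2; rw [hNNβ]; exact hMadm
        · rw [hNNγ γ h1 h2]; exact adm_top (T γ)
      have hfacNN : ∀ γ, MapFactorsThrough (T γ) (NN γ) := fun γ => (hadmNN γ).2.2
      have hfacH : MapFactorsThrough TT (Subgroup.pi Set.univ NN) :=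
        piSub_factors NN T hfacNN
      have hopenH : IsOpen ((Subgroup.pi Set.univ NN : Subgroup (∀ γ, G γ)) : Set (∀ γ, G γ)) := by
        rw [coe_piSub NN {α, β} (fun γ hγ => by
          rw [Finset.mem_insert, Finset.mem_singleton, not_or] at hγ
          exact hNNγ γ hγ.1 hγ.2)]
        exact isOpen_set_pi (Finset.finite_toSet _) (fun γ _ => (hadmNN γ).2.1)
      have hbijH : Function.Bijective (qmap TT _ hfacH) :=
        qmap_bijective_of_mp μ hmpP hopenH hfacH
      have htrH : Trans' (qmap TT _ hfacH) :=
        qmap_trans_of_ergodic μ hmpP hergP hopenH hfacH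
      haveI : ∀ γ, Nonempty (G γ ⧸ NN γ) := fun γ => hQne γ (NN γ)
      haveI : ∀ γ, Finite (G γ ⧸ NN γ) :=
        fun γ => Subgroup.quotient_finite_of_isOpen _ (hadmNN γ).2.1
      have hcomm := piQuot_comm NN T hfacNN hfacH
      have hbijPi : Function.Bijective
          (fun (q : ∀ γ, G γ ⧸ NN γ) γ => qmap (T γ) (NN γ) (hfacNN γ) (q γ)) :=
        bij_conj _ (piQuot_bijective NN) _ _ hcomm hbijH
      have htrPi : Trans'
          (fun (q : ∀ γ, G γ ⧸ NN γ) γ => qmap (T γ) (NN γ) (hfacNN γ) (q γ)) :=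
        trans_conj _ (piQuot_bijective NN).2 _ _ hcomm htrH
      have hbijc : ∀ γ, Function.Bijective (qmap (T γ) (NN γ) (hfacNN γ)) :=
        fun γ => pi_map_bij_coord _ hbijPi γ
      have hcop := coprime_of_pi_trans
        (fun γ => qmap (T γ) (NN γ) (hfacNN γ)) hne hbijc htrPi
      have e1 : Nat.card (G α ⧸ NN α) = N.index := by
        rw [hNNα, Subgroup.index_eq_card]
      have e2 : Nat.card (G β ⧸ NN β) = M.index := by
        rw [hNNβ, Subgroup.index_eq_card]
      rwa [e1, e2] at hcop
  · -- backward direction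
    rintro ⟨hfactor, hcop⟩
    have hmpa : ∀ α, ∀ S : Set (G α), MeasurableSet S → μa α (T α ⁻¹' S) = μa α S :=
      fun α => (hfactor α).1
    have herga : ∀ α, ∀ S : Set (G α), MeasurableSet S → T α ⁻¹' S = S
        → μa α S = 0 ∨ μa α S = 1 := fun α => (hfactor α).2
    -- per H ∈ 𝒩G : bijective and transitive quotient maps
    have hHfacts : ∀ H, ∀ hH : H ∈ 𝒩G,
        Function.Bijective (qmap TT H (hGprod.fac H hH))
          ∧ Trans' (qmap TT H (hGprod.fac H hH)) := by
      rintro H ⟨F, N, hN, htop, rfl⟩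
      have hfacNN : ∀ γ, MapFactorsThrough (T γ) (N γ) := fun γ => (hN γ).2.2
      have hfacH : MapFactorsThrough TT (Subgroup.pi Set.univ N) :=
        piSub_factors N T hfacNN
      haveI : ∀ γ, Nonempty (G γ ⧸ N γ) := fun γ => hQne γ (N γ)
      haveI : ∀ γ, Finite (G γ ⧸ N γ) :=
        fun γ => Subgroup.quotient_finite_of_isOpen _ (hN γ).2.1
      have hcomm := piQuot_comm N T hfacNN hfacH
      have hbijc : ∀ γ, Function.Bijective (qmap (T γ) (N γ) (hfacNN γ)) :=
        fun γ => qmap_bijective_of_mp (μa γ) (hmpa γ) (hN γ).2.1 (hfacNN γ)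
      have hbijPi : Function.Bijective
          (fun (q : ∀ γ, G γ ⧸ N γ) γ => qmap (T γ) (N γ) (hfacNN γ) (q γ)) :=
        Function.Bijective.piMap hbijc
      have htrPi : Trans'
          (fun (q : ∀ γ, G γ ⧸ N γ) γ => qmap (T γ) (N γ) (hfacNN γ) (q γ)) := by
        refine pi_trans _ F ?_ (fun γ _ => hbijc γ) ?_ ?_
        · intro γ hγ
          rw [htop γ hγ]
          exact QuotientGroup.subsingleton_quotient_top
        · intro γ _
          exact qmap_trans_of_ergodic (μa γ) (hmpa γ) (herga γ) (hN γ).2.1 (hfacNN γ)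
        · intro γ _ δ _ hgd
          have := hcop γ δ hgd (N γ) (N δ) (hN γ) (hN δ)
          rwa [Subgroup.index_eq_card, Subgroup.index_eq_card] at this
      exact ⟨bij_conj' _ (piQuot_bijective N) _ _ hcomm hbijPi,
        trans_conj' _ (piQuot_bijective N) _ _ hcomm htrPi⟩
    have hmpP : ∀ S : Set (∀ α, G α), MeasurableSet S → μ (TT ⁻¹' S) = μ S :=
      mp_of_family μ hGprod (fun H hH => (hHfacts H hH).1)
    exact ⟨hmpP, ergodic_of_family μ hGprod hmpP (fun H hH => (hHfacts H hH).2)⟩
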